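/- arXiv:1109.5365 — 6 statements merged into one kernel-verified Lean document; each statement's English description precedes it below -/
import Mathlib

section
/- Let a, b ∈ ℂ with Im(a·conj(b)) < 0 (so that the ℝ-linear map ℂ → ℂ sending 1 ↦ a and i ↦ b is orientation-preserving). Suppose 0 < ε ≤ 1/2, |‖a‖ − ‖b‖| ≤ ε‖b‖, and |Re(a·conj(b))| ≤ ε‖a‖‖b‖. Then ‖a + i·b‖ ≤ 3ε·‖a − i·b‖. -/
set_option maxHeartbeats 1000000 in
/-- Fact A of §4.2: if the partial derivatives `a = f_x` and `b = f_y` of an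
orientation-preserving `C¹` map have almost equal norms and almost vanishing
inner product, then `‖∂̄f‖ = ‖a + i·b‖/2` is small compared to
`‖∂f‖ = ‖a − i·b‖/2`, i.e. the map is almost conformal. -/
theorem stmt_0 (a b : ℂ) (ε : ℝ)
    (horient : (a * (starRingEnd ℂ) b).im < 0)
    (hε0 : 0 < ε) (hε1 : ε ≤ 1 / 2)
    (hnorm : |‖a‖ - ‖b‖| ≤ ε * ‖b‖)
    (hre : |(a * (starRingEnd ℂ) b).re| ≤ ε * ‖a‖ * ‖b‖) :
    ‖a + Complex.I * b‖ ≤ 3 * ε * ‖a - Complex.I * b‖ := by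
  have key : ∀ z : ℂ, ‖z‖^2 = z.re^2 + z.im^2 := fun z => by
    rw [Complex.sq_norm, Complex.normSq_apply]; ring
  set x := (a * (starRingEnd ℂ) b).re with hx
  set y := (a * (starRingEnd ℂ) b).im with hy
  have hydef : y = a.im * b.re - a.re * b.im := by
    rw [hy]
    simp [Complex.mul_im, Complex.conj_re, Complex.conj_im]; ring
  clear_value x y
  have h1 : ‖a + Complex.I * b‖^2 = ‖a‖^2 + ‖b‖^2 + 2 * y := by
    rw [key, key, key, hydef]
    simp [Complex.add_re, Complex.add_im, Complex.mul_re, Complex.mul_im,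
      Complex.I_re, Complex.I_im]
    ring
  have h2 : ‖a - Complex.I * b‖^2 = ‖a‖^2 + ‖b‖^2 - 2 * y := by
    rw [key, key, key, hydef]
    simp [Complex.sub_re, Complex.sub_im, Complex.mul_re, Complex.mul_im,
      Complex.I_re, Complex.I_im]
    ring
  have h3 : x^2 + y^2 = ‖a‖^2 * ‖b‖^2 := by
    have h4 : ‖a * (starRingEnd ℂ) b‖^2 = (‖a‖ * ‖b‖)^2 := by
      rw [norm_mul, RCLike.norm_conj]
    rw [key] at h4
    rw [hx, hy]
    nlinarith [h4]
  have hA : (0:ℝ) ≤ ‖a‖ := norm_nonneg a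
  have hB : (0:ℝ) ≤ ‖b‖ := norm_nonneg b
  have habs := abs_le.mp hnorm
  have hreabs := abs_le.mp hre
  have hL : (0:ℝ) ≤ ‖a + Complex.I * b‖ := norm_nonneg _
  have hR : (0:ℝ) ≤ ‖a - Complex.I * b‖ := norm_nonneg _
  have hx2 : x^2 ≤ (ε * ‖a‖ * ‖b‖)^2 := sq_le_sq' hreabs.1 hreabs.2
  have hy2 : y^2 ≥ ‖a‖^2 * ‖b‖^2 * (1 - ε^2) := by nlinarith [h3, hx2]
  have hε2 : (0:ℝ) ≤ 1 - ε^2 := by nlinarith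
  have ht : ‖a‖ * ‖b‖ * (1 - ε^2) ≤ -y := by
    nlinarith [hy2, horient, mul_nonneg (mul_nonneg hA hB) hε2]
  have hdiff : (‖a‖ - ‖b‖)^2 ≤ (ε * ‖b‖)^2 := sq_le_sq' habs.1 habs.2
  have h2ab : 2*(‖a‖*‖b‖) ≤ ‖a‖^2 + ‖b‖^2 := by nlinarith [sq_nonneg (‖a‖ - ‖b‖)]
  have h2ab' : ε^2 * (2*(‖a‖*‖b‖)) ≤ ε^2 * (‖a‖^2 + ‖b‖^2) :=
    mul_le_mul_of_nonneg_left h2ab (sq_nonneg ε)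
  have hLHS : ‖a‖^2 + ‖b‖^2 + 2*y ≤ 2*ε^2*(‖a‖^2 + ‖b‖^2) := by
    nlinarith [ht, hdiff, h2ab', mul_nonneg (sq_nonneg ε) (sq_nonneg ‖a‖)]
  have hRHS : 2*ε^2*(‖a‖^2 + ‖b‖^2) ≤ 9*ε^2*(‖a‖^2 + ‖b‖^2 - 2*y) := by
    nlinarith [mul_nonneg (sq_nonneg ε) (neg_nonneg.mpr horient.le),
      mul_nonneg (sq_nonneg ε) (add_nonneg (sq_nonneg ‖a‖) (sq_nonneg ‖b‖))]
  have hsq : ‖a + Complex.I * b‖^2 ≤ (3 * ε * ‖a - Complex.I * b‖)^2 := by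
    rw [h1, mul_pow, mul_pow, h2]
    calc ‖a‖^2 + ‖b‖^2 + 2*y ≤ 9*ε^2*(‖a‖^2 + ‖b‖^2 - 2*y) := le_trans hLHS hRHS
      _ = 3^2 * ε^2 * (‖a‖^2 + ‖b‖^2 - 2*y) := by ring
  have h3R : (0:ℝ) ≤ 3 * ε * ‖a - Complex.I * b‖ :=
    mul_nonneg (by linarith) hR
  calc ‖a + Complex.I * b‖ = Real.sqrt (‖a + Complex.I * b‖^2) := (Real.sqrt_sq hL).symm
    _ ≤ Real.sqrt ((3 * ε * ‖a - Complex.I * b‖)^2) := Real.sqrt_le_sqrt hsq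
    _ = 3 * ε * ‖a - Complex.I * b‖ := Real.sqrt_sq h3R
end

section
/- Let a > 0, 0 < ε ≤ 1/2, and let g₁, g₂ : [0, a] → ℝ be C¹ functions with g₂(y) > g₁(y) > 0 for all y ∈ [0, a]. Set b = sup_{0 ≤ y ≤ a} (g₂(y) − g₁(y)), and let R = {(x, y) ∈ ℝ² : 0 ≤ y ≤ a, g₁(y) ≤ x ≤ g₂(y)}. Define f : R → ℝ² by f(x, y) = ( b·(x − g₁(y))/(g₂(y) − g₁(y)), y ). Then f is a homeomorphism of R onto the rectangle [0, b] × [0, a] that preserves the second coordinate (it is height-preserving); moreover there is a universal constant C > 0 such that at every point (x, y) ∈ R at whose height y one has |g₁′(y)| ≤ ε, |g₂′(y)| ≤ ε, and |b/(g₂(y) − g₁(y)) − 1| ≤ ε, the partial derivatives of f satisfy |‖f_x‖/‖f_y‖ − 1| ≤ Cε and |⟨f_x, f_y⟩| ≤ Cε. -/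
open Set

private theorem qc_sqrt_bound (ε E : ℝ) (hε : 0 < ε) (hε2 : ε ≤ 1 / 2)
    (hE2 : E ^ 2 ≤ 25 * ε ^ 2) : Real.sqrt (E ^ 2 + 1 ^ 2) ≤ 1 + 7 * ε := by
  have h1 : E ^ 2 + 1 ^ 2 ≤ (1 + E ^ 2 / 2) ^ 2 := by nlinarith [sq_nonneg (E ^ 2)]
  have h2 : Real.sqrt (E ^ 2 + 1 ^ 2) ≤ 1 + E ^ 2 / 2 :=
    calc Real.sqrt (E ^ 2 + 1 ^ 2) ≤ Real.sqrt ((1 + E ^ 2 / 2) ^ 2) := Real.sqrt_le_sqrt h1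
      _ = 1 + E ^ 2 / 2 := Real.sqrt_sq (by positivity)
  have hee : ε ^ 2 ≤ ε / 2 := by nlinarith
  set q := Real.sqrt (E ^ 2 + 1 ^ 2)
  linarith

private theorem qc_ratio (ε s q : ℝ) (hε : 0 < ε) (hsl : 1 - ε ≤ s) (hsu : s ≤ 1 + ε)
    (hq1 : 1 ≤ q) (hqU : q ≤ 1 + 7 * ε) : |s / q - 1| ≤ 100 * ε := by
  have hq0 : (0:ℝ) < q := by linarith
  rw [abs_le]
  constructor
  · have key : (1 - 100 * ε) * q ≤ s := by
      nlinarith [mul_le_mul_of_nonneg_left hq1 hε.le]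
    have h := (le_div_iff₀ hq0).2 key
    linarith
  · rw [sub_le_iff_le_add, div_le_iff₀ hq0]
    nlinarith [mul_le_mul_of_nonneg_left hq1 (show (0:ℝ) ≤ 100 * ε + 1 by linarith)]

set_option maxHeartbeats 1000000 in
/-- Lemma 4.3 (lem:qcstraight): the horizontal straightening map of a region
bounded by two horizontal segments and two C¹ graphs `x = g₁(y)`, `x = g₂(y)`
is a height-preserving homeomorphism onto a Euclidean rectangle, and at every
height where the graphs are ε-almost-vertical and the width is ε-close to `b`,
its partial derivatives satisfy `|‖f_x‖/‖f_y‖ − 1| ≤ Cε` and `|⟨f_x, f_y⟩| ≤ Cε`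
for a universal constant `C > 0`. -/
theorem stmt_1 :
    ∃ C > (0 : ℝ), ∀ (a ε : ℝ) (g₁ g₂ : ℝ → ℝ),
      0 < a → 0 < ε → ε ≤ 1 / 2 →
      ContDiffOn ℝ 1 g₁ (Icc 0 a) → ContDiffOn ℝ 1 g₂ (Icc 0 a) →
      (∀ y ∈ Icc (0 : ℝ) a, 0 < g₁ y ∧ g₁ y < g₂ y) →
      ∀ b : ℝ, IsLUB ((fun y => g₂ y - g₁ y) '' Icc 0 a) b →
      ∀ R : Set (ℝ × ℝ),
        R = {p : ℝ × ℝ | p.2 ∈ Icc 0 a ∧ p.1 ∈ Icc (g₁ p.2) (g₂ p.2)} →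
      ∀ f : ℝ × ℝ → ℝ × ℝ,
        f = (fun p => (b * (p.1 - g₁ p.2) / (g₂ p.2 - g₁ p.2), p.2)) →
        -- f is a homeomorphism of R onto the rectangle [0,b] × [0,a]
        (∃ e : ↥R ≃ₜ ↥(Icc (0 : ℝ) b ×ˢ Icc (0 : ℝ) a),
            ∀ p : ↥R, (e p : ℝ × ℝ) = f ↑p) ∧
        -- f is height-preserving
        (∀ p ∈ R, (f p).2 = p.2) ∧
        -- partial derivative bounds at good heights
        (∀ x y : ℝ, (x, y) ∈ R →
          |derivWithin g₁ (Icc 0 a) y| ≤ ε →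
          |derivWithin g₂ (Icc 0 a) y| ≤ ε →
          |b / (g₂ y - g₁ y) - 1| ≤ ε →
          ∃ fx fy : ℝ × ℝ,
            HasDerivWithinAt (fun t => f (t, y)) fx (Icc (g₁ y) (g₂ y)) x ∧
            HasDerivWithinAt (fun t => f (x, t)) fy (Icc 0 a) y ∧
            |Real.sqrt (fx.1 ^ 2 + fx.2 ^ 2) / Real.sqrt (fy.1 ^ 2 + fy.2 ^ 2) - 1|
              ≤ C * ε ∧
            |fx.1 * fy.1 + fx.2 * fy.2| ≤ C * ε) := by
  refine ⟨100, by norm_num, ?_⟩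
  intro a ε g₁ g₂ ha hε hε2 hg₁ hg₂ hgt b hb R hR f hf
  subst hR hf
  have h0a : (0:ℝ) ∈ Icc (0:ℝ) a := ⟨le_rfl, ha.le⟩
  have hd_pos : ∀ y ∈ Icc (0:ℝ) a, 0 < g₂ y - g₁ y := fun y hy => sub_pos.2 (hgt y hy).2
  have hdb : ∀ y ∈ Icc (0:ℝ) a, g₂ y - g₁ y ≤ b := fun y hy => hb.1 ⟨y, hy, rfl⟩
  have hb_pos : (0:ℝ) < b := lt_of_lt_of_le (hd_pos 0 h0a) (hdb 0 h0a)
  set Rs : Set (ℝ × ℝ) := {p : ℝ × ℝ | p.2 ∈ Icc 0 a ∧ p.1 ∈ Icc (g₁ p.2) (g₂ p.2)} with hRs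
  set F : ℝ × ℝ → ℝ × ℝ := fun p => (b * (p.1 - g₁ p.2) / (g₂ p.2 - g₁ p.2), p.2) with hF
  set G : ℝ × ℝ → ℝ × ℝ := fun q => (g₁ q.2 + q.1 * (g₂ q.2 - g₁ q.2) / b, q.2) with hG
  have hFmem : ∀ p ∈ Rs, F p ∈ Icc (0:ℝ) b ×ˢ Icc (0:ℝ) a := by
    rintro ⟨x, y⟩ ⟨hy, hx1, hx2⟩
    have hd := hd_pos y hy
    refine ⟨⟨?_, ?_⟩, hy⟩
    · exact div_nonneg (mul_nonneg hb_pos.le (by linarith)) hd.le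
    · rw [div_le_iff₀ hd]; nlinarith
  have hGmem : ∀ q ∈ Icc (0:ℝ) b ×ˢ Icc (0:ℝ) a, G q ∈ Rs := by
    rintro ⟨u, y⟩ ⟨⟨hu0, hub⟩, hy⟩
    have hd := hd_pos y hy
    refine ⟨hy, ?_, ?_⟩
    · simp only [G]
      have : 0 ≤ u * (g₂ y - g₁ y) / b := div_nonneg (mul_nonneg hu0 hd.le) hb_pos.le
      linarith
    · simp only [G]
      have : u * (g₂ y - g₁ y) / b ≤ g₂ y - g₁ y := by
        rw [div_le_iff₀ hb_pos]; nlinarith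
      linarith
  have hFcont : ContinuousOn F Rs := by
    have hm : MapsTo (fun p : ℝ × ℝ => p.2) Rs (Icc 0 a) := fun p hp => hp.1
    have h1 : ContinuousOn (fun p : ℝ × ℝ => g₁ p.2) Rs :=
      (hg₁.continuousOn).comp continuous_snd.continuousOn hm
    have h2 : ContinuousOn (fun p : ℝ × ℝ => g₂ p.2) Rs :=
      (hg₂.continuousOn).comp continuous_snd.continuousOn hm
    exact ((continuousOn_const.mul (continuous_fst.continuousOn.sub h1)).div
      (h2.sub h1) (fun p hp => (hd_pos p.2 hp.1).ne')).prodMk continuous_snd.continuousOn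
  have hGcont : ContinuousOn G (Icc (0:ℝ) b ×ˢ Icc (0:ℝ) a) := by
    have hm : MapsTo (fun p : ℝ × ℝ => p.2) (Icc (0:ℝ) b ×ˢ Icc (0:ℝ) a) (Icc 0 a) :=
      fun p hp => hp.2
    have h1 : ContinuousOn (fun p : ℝ × ℝ => g₁ p.2) (Icc (0:ℝ) b ×ˢ Icc (0:ℝ) a) :=
      (hg₁.continuousOn).comp continuous_snd.continuousOn hm
    have h2 : ContinuousOn (fun p : ℝ × ℝ => g₂ p.2) (Icc (0:ℝ) b ×ˢ Icc (0:ℝ) a) :=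
      (hg₂.continuousOn).comp continuous_snd.continuousOn hm
    exact (h1.add ((continuous_fst.continuousOn.mul (h2.sub h1)).div_const b)).prodMk
      continuous_snd.continuousOn
  refine ⟨?_, fun p hp => rfl, ?_⟩
  · refine ⟨⟨⟨fun p => ⟨F p, hFmem p p.2⟩, fun q => ⟨G q, hGmem q q.2⟩, ?_, ?_⟩, ?_, ?_⟩,
      fun p => rfl⟩
    · rintro ⟨⟨x, y⟩, hy, hx1, hx2⟩
      have hd := (hd_pos y hy).ne'
      apply Subtype.ext
      simp only [F, G]
      refine Prod.ext ?_ rfl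
      field_simp
      ring
    · rintro ⟨⟨u, y⟩, ⟨hu0, hub⟩, hy⟩
      have hd := (hd_pos y hy).ne'
      apply Subtype.ext
      simp only [F, G]
      refine Prod.ext ?_ rfl
      field_simp
      ring
    · exact Continuous.subtype_mk hFcont.restrict _
    · exact Continuous.subtype_mk hGcont.restrict _
  · rintro x y ⟨hy, hx1, hx2⟩ hd1 hd2 hs
    have hyI : y ∈ Icc (0:ℝ) a := hy
    have hd := hd_pos y hy
    set d₁ := derivWithin g₁ (Icc 0 a) y with hd₁
    set d₂ := derivWithin g₂ (Icc 0 a) y with hd₂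
    have hg1d : HasDerivWithinAt g₁ d₁ (Icc 0 a) y :=
      ((hg₁.differentiableOn one_ne_zero) y hyI).hasDerivWithinAt
    have hg2d : HasDerivWithinAt g₂ d₂ (Icc 0 a) y :=
      ((hg₂.differentiableOn one_ne_zero) y hyI).hasDerivWithinAt
    set s : ℝ := b / (g₂ y - g₁ y) with hs'
    set E : ℝ := (b * (0 - d₁) * (g₂ y - g₁ y) - b * (x - g₁ y) * (d₂ - d₁)) /
      (g₂ y - g₁ y) ^ 2 with hE
    obtain ⟨hd1l, hd1u⟩ := abs_le.1 hd1
    obtain ⟨hd2l, hd2u⟩ := abs_le.1 hd2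
    obtain ⟨hsl, hsu⟩ := abs_le.1 hs
    have hw0 : 0 ≤ x - g₁ y := by linarith
    have hwd : x - g₁ y ≤ g₂ y - g₁ y := by linarith
    have hspos : 0 < s := by linarith
    have hbd : b ≤ (1 + ε) * (g₂ y - g₁ y) := by
      rw [← div_le_iff₀ hd]; linarith
    have hnum : |b * (0 - d₁) * (g₂ y - g₁ y) - b * (x - g₁ y) * (d₂ - d₁)|
        ≤ 3 * ε * (b * (g₂ y - g₁ y)) := by
      rw [abs_le]
      constructor <;>
      nlinarith [mul_nonneg (mul_nonneg hb_pos.le hd.le) (show 0 ≤ ε + d₁ by linarith),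
        mul_nonneg (mul_nonneg hb_pos.le hd.le) (show 0 ≤ ε - d₁ by linarith),
        mul_nonneg (mul_nonneg hb_pos.le hw0) (show 0 ≤ 2*ε + d₂ - d₁ by linarith),
        mul_nonneg (mul_nonneg hb_pos.le hw0) (show 0 ≤ 2*ε - d₂ + d₁ by linarith),
        mul_nonneg (mul_nonneg (show (0:ℝ) ≤ 2*ε by linarith) hb_pos.le)
          (show 0 ≤ (g₂ y - g₁ y) - (x - g₁ y) by linarith)]
    have hEb : |E| ≤ 5 * ε := by
      have h2 : |E| = |b * (0 - d₁) * (g₂ y - g₁ y) - b * (x - g₁ y) * (d₂ - d₁)|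
          / (g₂ y - g₁ y) ^ 2 := by
        rw [hE, abs_div, abs_of_pos (pow_pos hd 2)]
      rw [h2, div_le_iff₀ (pow_pos hd 2)]
      calc |b * (0 - d₁) * (g₂ y - g₁ y) - b * (x - g₁ y) * (d₂ - d₁)|
          ≤ 3 * ε * (b * (g₂ y - g₁ y)) := hnum
        _ ≤ 5 * ε * (g₂ y - g₁ y) ^ 2 := by
            nlinarith [mul_le_mul_of_nonneg_left hbd
                (mul_nonneg (show (0:ℝ) ≤ 3 * ε by linarith) hd.le),
              mul_nonneg (mul_nonneg (show (0:ℝ) ≤ 2 - 3 * ε by linarith) hε.le)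
                (sq_nonneg (g₂ y - g₁ y))]
    clear_value E
    have hE2 : E ^ 2 ≤ 25 * ε ^ 2 := by
      calc E ^ 2 = |E| ^ 2 := (sq_abs E).symm
        _ ≤ (5 * ε) ^ 2 := pow_le_pow_left₀ (abs_nonneg E) hEb 2
        _ = 25 * ε ^ 2 := by ring
    have hq1 : 1 ≤ Real.sqrt (E ^ 2 + 1 ^ 2) := by
      have h1 := Real.sqrt_le_sqrt (show (1:ℝ) ≤ E ^ 2 + 1 ^ 2 by linarith [sq_nonneg E])
      rwa [Real.sqrt_one] at h1
    have hq0 : 0 < Real.sqrt (E ^ 2 + 1 ^ 2) := by linarith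
    have hqU : Real.sqrt (E ^ 2 + 1 ^ 2) ≤ 1 + 7 * ε := qc_sqrt_bound ε E hε hε2 hE2
    refine ⟨(s, 0), (E, 1), ?_, ?_, ?_, ?_⟩
    · have h1 : HasDerivWithinAt (fun t : ℝ => b * (t - g₁ y) / (g₂ y - g₁ y)) s
        (Icc (g₁ y) (g₂ y)) x := by
        have := (((hasDerivWithinAt_id x (Icc (g₁ y) (g₂ y))).sub_const (g₁ y)).const_mul
          b).div_const (g₂ y - g₁ y)
        simpa using this
      exact h1.prodMk (hasDerivWithinAt_const x _ y)
    · have hc : HasDerivWithinAt (fun t : ℝ => b * (x - g₁ t)) (b * (0 - d₁)) (Icc 0 a) y :=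
        ((hasDerivWithinAt_const y (Icc (0:ℝ) a) x).sub hg1d).const_mul b
      have hden : HasDerivWithinAt (fun t : ℝ => g₂ t - g₁ t) (d₂ - d₁) (Icc 0 a) y :=
        hg2d.sub hg1d
      rw [hE]
      exact (hc.div hden hd.ne').prodMk (hasDerivWithinAt_id y _)
    · show |Real.sqrt (s ^ 2 + 0 ^ 2) / Real.sqrt (E ^ 2 + 1 ^ 2) - 1| ≤ 100 * ε
      have hs2 : Real.sqrt (s ^ 2 + 0 ^ 2) = s := by
        rw [show s ^ 2 + 0 ^ 2 = s ^ 2 by ring, Real.sqrt_sq hspos.le]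
      rw [hs2]
      exact qc_ratio ε s (Real.sqrt (E ^ 2 + 1 ^ 2)) hε (by linarith) (by linarith) hq1 hqU
    · show |s * E + 0 * 1| ≤ 100 * ε
      have hsA : |s| ≤ 3 / 2 := by rw [abs_of_pos hspos]; linarith
      calc |s * E + 0 * 1| = |s| * |E| := by rw [zero_mul, add_zero, abs_mul]
        _ ≤ (3 / 2) * (5 * ε) := mul_le_mul hsA hEb (abs_nonneg _) (by norm_num)
        _ ≤ 100 * ε := by linarith
end

section
/- Let c ∈ ℂ, c ≠ 0, and let g be holomorphic and injective on an open subset of ℂ containing the closed unit disk, with g(0) = 0 and g′(0) = c. Then there exist universal constants C > 0 and ε₀ > 0 such that for every ε ∈ (0, ε₀] there exist s ∈ (0, 1) and a map G from the closed unit disk onto g(closed unit disk) such that: (1) G is a homeomorphism onto g(closed unit disk), continuously real-differentiable on the open unit disk, with ‖∂̄G(z)‖ ≤ Cε·‖∂G(z)‖ for all |z| < 1; (2) G(z) = c·z for all |z| ≤ s; (3) G(z) = g(z) for all |z| = 1. -/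
open Metric Complex


lemma cutoff_exists : ∃ K : ℝ, 1 ≤ K ∧ ∀ r : ℝ, 0 < r → ∃ χ : ℂ → ℝ,
    ContDiff ℝ 1 χ ∧ (∀ z : ℂ, ‖z‖ ≤ r/4 → χ z = 1) ∧
    (∀ z : ℂ, r/2 ≤ ‖z‖ → χ z = 0) ∧ (∀ z : ℂ, 0 ≤ χ z ∧ χ z ≤ 1) ∧
    (∀ z : ℂ, ‖fderiv ℝ χ z‖ ≤ K / r) := by
  set f : ℝ → ℝ := fun t => Real.smoothTransition ((4 - 16*t)/3) with hf
  have hfc : ContDiff ℝ 1 f := Real.smoothTransition.contDiff.comp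
    ((contDiff_const.sub (contDiff_const.mul contDiff_id)).div_const 3)
  have hf1 : ∀ t : ℝ, t ≤ 1/16 → f t = 1 := fun t ht =>
    Real.smoothTransition.one_of_one_le (by linarith)
  have hf0 : ∀ t : ℝ, 1/4 ≤ t → f t = 0 := fun t ht =>
    Real.smoothTransition.zero_of_nonpos (by linarith)
  have hderivc : Continuous (deriv f) := hfc.continuous_deriv le_rfl
  obtain ⟨M, hM⟩ := (isCompact_Icc (a := (0:ℝ)) (b := 1)).exists_bound_of_continuousOn
    hderivc.continuousOn
  set K : ℝ := 4 * max M 0 + 1 with hK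
  have hK1 : 1 ≤ K := by have := le_max_right M 0; linarith
  refine ⟨K, hK1, fun r hr => ?_⟩
  set n : ℂ → ℝ := fun z => (z.re*z.re + z.im*z.im) * (r^2)⁻¹ with hn
  have hnval : ∀ z : ℂ, n z = ‖z‖^2 / r^2 := by
    intro z
    simp only [hn, Complex.sq_norm, Complex.normSq_apply, div_eq_mul_inv]
  set χ : ℂ → ℝ := fun z => f (n z) with hχ
  have hnc : ContDiff ℝ 1 n :=
    ((Complex.reCLM.contDiff.mul Complex.reCLM.contDiff).add
      (Complex.imCLM.contDiff.mul Complex.imCLM.contDiff)).mul contDiff_const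
  have hχc : ContDiff ℝ 1 χ := hfc.comp hnc
  refine ⟨χ, hχc, ?_, ?_, ?_, ?_⟩
  · intro z hz
    apply hf1
    rw [hnval, div_le_div_iff₀ (by positivity) (by norm_num)]
    nlinarith [norm_nonneg z]
  · intro z hz
    apply hf0
    rw [hnval, le_div_iff₀ (by positivity)]
    nlinarith [hr.le]
  · intro z
    exact ⟨Real.smoothTransition.nonneg _, Real.smoothTransition.le_one _⟩
  · intro z
    rcases le_or_gt ‖z‖ r with hzr | hzr
    · have hre : HasFDerivAt (fun w : ℂ => w.re) (Complex.reCLM : ℂ →L[ℝ] ℝ) z :=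
        Complex.reCLM.hasFDerivAt
      have him : HasFDerivAt (fun w : ℂ => w.im) (Complex.imCLM : ℂ →L[ℝ] ℝ) z :=
        Complex.imCLM.hasFDerivAt
      have hDn := (((hre.mul hre).add (him.mul him)).mul_const ((r^2)⁻¹))
      have hfd : HasDerivAt f (deriv f (n z)) (n z) :=
        ((hfc.differentiable one_ne_zero) (n z)).hasDerivAt
      have hD : HasFDerivAt χ (deriv f (n z) • (r ^ 2)⁻¹ •
          (z.re • Complex.reCLM + z.re • Complex.reCLM +
            (z.im • Complex.imCLM + z.im • Complex.imCLM))) z := hfd.comp_hasFDerivAt z hDn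
      rw [hD.fderiv]
      have hnIcc : n z ∈ Set.Icc (0:ℝ) 1 := by
        constructor
        · rw [hnval]; positivity
        · rw [hnval, div_le_one (by positivity)]
          nlinarith [norm_nonneg z]
      have hMb : ‖deriv f (n z)‖ ≤ max M 0 := le_trans (hM _ hnIcc) (le_max_left M 0)
      have hDnb : ‖(r ^ 2)⁻¹ • (z.re • Complex.reCLM + z.re • Complex.reCLM +
          (z.im • Complex.imCLM + z.im • Complex.imCLM) : ℂ →L[ℝ] ℝ)‖ ≤ 4 / r := by
        apply ContinuousLinearMap.opNorm_le_bound _ (by positivity)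
        intro v
        simp only [ContinuousLinearMap.smul_apply, ContinuousLinearMap.add_apply,
          Complex.reCLM_apply, Complex.imCLM_apply, smul_eq_mul]
        have h1 : |v.re| ≤ ‖v‖ := by exact Complex.abs_re_le_norm v
        have h2 : |v.im| ≤ ‖v‖ := by exact Complex.abs_im_le_norm v
        have h3 : |z.re| ≤ r := le_trans (by exact le_trans (Complex.abs_re_le_norm z) hzr) le_rfl
        have h4 : |z.im| ≤ r := by exact le_trans (Complex.abs_im_le_norm z) hzr
        have hv : 0 ≤ ‖v‖ := norm_nonneg v
        rw [Real.norm_eq_abs, abs_mul, abs_inv, abs_of_pos (pow_pos hr 2)]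
        have k1 : |z.re * v.re| ≤ r * ‖v‖ := by
          rw [abs_mul]; exact mul_le_mul h3 h1 (abs_nonneg _) hr.le
        have k2 : |z.im * v.im| ≤ r * ‖v‖ := by
          rw [abs_mul]; exact mul_le_mul h4 h2 (abs_nonneg _) hr.le
        have hS : |z.re * v.re + z.re * v.re + (z.im * v.im + z.im * v.im)| ≤ 4 * r * ‖v‖ := by
          have t1 := abs_add_le (z.re * v.re + z.re * v.re) (z.im * v.im + z.im * v.im)
          have t2 := abs_add_le (z.re * v.re) (z.re * v.re)
          have t3 := abs_add_le (z.im * v.im) (z.im * v.im)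
          linarith
        calc (r ^ 2)⁻¹ * |z.re * v.re + z.re * v.re + (z.im * v.im + z.im * v.im)|
            ≤ (r ^ 2)⁻¹ * (4 * r * ‖v‖) := by gcongr
          _ = 4 / r * ‖v‖ := by field_simp
      calc ‖deriv f (n z) • (r ^ 2)⁻¹ • (z.re • Complex.reCLM + z.re • Complex.reCLM +
              (z.im • Complex.imCLM + z.im • Complex.imCLM) : ℂ →L[ℝ] ℝ)‖
          ≤ max M 0 * (4/r) :=
            le_trans (ContinuousLinearMap.opNorm_smul_le _ _)
              (mul_le_mul hMb hDnb (norm_nonneg _) (le_max_right M 0))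
        _ ≤ K / r := by
            rw [hK, div_eq_mul_inv, div_eq_mul_inv]
            have h1 : (0:ℝ) < r⁻¹ := by positivity
            nlinarith [le_max_right M 0]
    · have hev : χ =ᶠ[nhds z] fun _ => 0 := by
        have hopen : IsOpen {w : ℂ | r/2 < ‖w‖} := isOpen_lt continuous_const continuous_norm
        filter_upwards [hopen.mem_nhds (by simpa using lt_of_le_of_lt (by linarith) hzr)] with w hw
        apply hf0
        rw [hnval, le_div_iff₀ (by positivity)]
        have : r/2 ≤ ‖w‖ := le_of_lt hw
        nlinarith [hr.le]
      rw [hev.fderiv_eq, fderiv_const_apply]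
      simp only [Pi.zero_apply, norm_zero]
      positivity


lemma inverse_exists (c : ℂ) (hc : c ≠ 0) (g : ℂ → ℂ) (U : Set ℂ) (hU : IsOpen U)
    (hsub : closedBall (0:ℂ) 1 ⊆ U) (hg : DifferentiableOn ℂ g U) (hinj : Set.InjOn g U)
    (hg0 : g 0 = 0) (hgd : deriv g 0 = c) :
    ∃ r₁ : ℝ, 0 < r₁ ∧ r₁ ≤ 1/2 ∧ ∃ h : ℂ → ℂ,
      h 0 = 0 ∧ DifferentiableOn ℂ h (ball 0 r₁) ∧ deriv h 0 = 1 ∧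
      (∀ z ∈ ball (0:ℂ) r₁, h z ∈ closedBall (0:ℂ) (1/2) ∧ g (h z) = c * z) := by
  have hU0 : (0:ℂ) ∈ U := hsub (by simp)
  have hga : AnalyticOnNhd ℂ g U := hg.analyticOnNhd hU
  have hstrict : HasStrictDerivAt g c 0 := by
    have h1 := ((hga 0 hU0).contDiffAt (n := 1)).hasStrictDerivAt one_ne_zero
    rwa [hgd] at h1
  have hsF := hstrict.hasStrictFDerivAt_equiv hc
  set p : OpenPartialHomeomorph ℂ ℂ := hsF.toOpenPartialHomeomorph g with hp
  have hpcoe : (p : ℂ → ℂ) = g := hsF.toOpenPartialHomeomorph_coe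
  have h0src : (0:ℂ) ∈ p.source := hsF.mem_toOpenPartialHomeomorph_source
  have h0tgt : (0:ℂ) ∈ p.target := by
    have h1 := hsF.image_mem_toOpenPartialHomeomorph_target
    rwa [hg0] at h1
  have hp0 : p 0 = 0 := by rw [show (p : ℂ → ℂ) 0 = g 0 from congrFun hpcoe 0, hg0]
  have hφ0 : p.symm 0 = 0 := by
    conv_lhs => rw [← hp0]
    exact p.left_inv h0src
  have hdga : AnalyticOnNhd ℂ (deriv g) U := hga.deriv
  have hOopen : IsOpen ((U ∩ deriv g ⁻¹' {0}ᶜ) ∩ (p.source ∩ ball (0:ℂ) (1/2))) := by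
    apply IsOpen.inter
    · exact hdga.continuousOn.isOpen_inter_preimage hU isOpen_compl_singleton
    · exact p.open_source.inter isOpen_ball
  set O : Set ℂ := (U ∩ deriv g ⁻¹' {0}ᶜ) ∩ (p.source ∩ ball (0:ℂ) (1/2)) with hO
  have hO0 : (0:ℂ) ∈ O := by
    refine ⟨⟨hU0, ?_⟩, h0src, by simp⟩
    simp only [Set.mem_preimage, Set.mem_compl_iff, Set.mem_singleton_iff, hgd]
    exact hc
  set V : Set ℂ := p.target ∩ p.symm ⁻¹' O with hV
  have hVopen : IsOpen V :=
    p.continuousOn_symm.isOpen_inter_preimage p.open_target hOopen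
  have hV0 : (0:ℂ) ∈ V := ⟨h0tgt, by simp [Set.mem_preimage, hφ0, hO0]⟩
  have hrinv : ∀ w ∈ V, g (p.symm w) = w := by
    intro w hw
    rw [← hpcoe]
    exact p.right_inv hw.1
  have hφdiff : ∀ w ∈ V, HasDerivAt p.symm ((deriv g (p.symm w))⁻¹) w := by
    intro w hw
    have hmemO : p.symm w ∈ O := hw.2
    apply HasDerivAt.of_local_left_inverse
    · exact p.continuousAt_symm hw.1
    · exact (hg.differentiableAt (hU.mem_nhds hmemO.1.1)).hasDerivAt
    · exact hmemO.1.2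
    · filter_upwards [p.open_target.mem_nhds hw.1] with y hy
      rw [← hpcoe]
      exact p.right_inv hy
  obtain ⟨r₀, hr₀, hball⟩ := Metric.mem_nhds_iff.1 (hVopen.mem_nhds hV0)
  have hcpos : 0 < ‖c‖ := norm_pos_iff.2 hc
  set r₁ : ℝ := min ((r₀/2) / ‖c‖) (1/2) with hr₁
  have hr₁pos : 0 < r₁ := lt_min (by positivity) (by norm_num)
  have hmaps : ∀ z ∈ ball (0:ℂ) r₁, c * z ∈ V := by
    intro z hz
    apply hball
    rw [mem_ball_zero_iff] at hz ⊢
    have h1 : ‖z‖ < (r₀/2) / ‖c‖ := lt_of_lt_of_le hz (min_le_left _ _)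
    rw [norm_mul]
    calc ‖c‖ * ‖z‖ < ‖c‖ * ((r₀/2)/‖c‖) := by gcongr
      _ = r₀ / 2 := mul_div_cancel₀ _ (ne_of_gt hcpos)
      _ < r₀ := by linarith
  refine ⟨r₁, hr₁pos, min_le_right _ _, fun z => p.symm (c * z), by simp [hφ0], ?_, ?_, ?_⟩
  · intro z hz
    have h1 := (hφdiff _ (hmaps z hz)).comp z ((hasDerivAt_id z).const_mul c)
    exact h1.differentiableAt.differentiableWithinAt
  · have h1 := (hφdiff _ (hmaps 0 (mem_ball_self hr₁pos))).comp 0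
      ((hasDerivAt_id 0).const_mul c)
    have h2 := h1.deriv
    simp only [Function.comp_def, mul_zero, hφ0, hgd, mul_one] at h2 ⊢
    rw [h2]
    field_simp
  · intro z hz
    have h1 := hmaps z hz
    refine ⟨ball_subset_closedBall ((h1.2 : p.symm (c*z) ∈ O).2.2), hrinv _ h1⟩


section helpers

lemma norm_aux (d : ℂ) : ‖((1:ℂ→L[ℂ]ℂ).smulRight d).restrictScalars ℝ‖ = ‖d‖ := by
  rw [ContinuousLinearMap.norm_restrictScalars, ContinuousLinearMap.norm_smulRight_apply,
    ContinuousLinearMap.one_def, ContinuousLinearMap.norm_id, one_mul]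

end helpers

set_option maxHeartbeats 2000000 in
theorem stmt_8' (cutoff_exists : ∃ K : ℝ, 1 ≤ K ∧ ∀ r : ℝ, 0 < r → ∃ χ : ℂ → ℝ,
      ContDiff ℝ 1 χ ∧ (∀ z : ℂ, ‖z‖ ≤ r/4 → χ z = 1) ∧
      (∀ z : ℂ, r/2 ≤ ‖z‖ → χ z = 0) ∧ (∀ z : ℂ, 0 ≤ χ z ∧ χ z ≤ 1) ∧
      (∀ z : ℂ, ‖fderiv ℝ χ z‖ ≤ K / r))
    (inverse_exists : ∀ (c : ℂ), c ≠ 0 → ∀ (g : ℂ → ℂ) (U : Set ℂ), IsOpen U →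
      closedBall (0:ℂ) 1 ⊆ U → DifferentiableOn ℂ g U → Set.InjOn g U →
      g 0 = 0 → deriv g 0 = c →
      ∃ r₁ : ℝ, 0 < r₁ ∧ r₁ ≤ 1/2 ∧ ∃ h : ℂ → ℂ,
        h 0 = 0 ∧ DifferentiableOn ℂ h (ball 0 r₁) ∧ deriv h 0 = 1 ∧
        (∀ z ∈ ball (0:ℂ) r₁, h z ∈ closedBall (0:ℂ) (1/2) ∧ g (h z) = c * z)) :
    ∃ C > (0 : ℝ), ∃ ε₀ > (0 : ℝ),
      ∀ (c : ℂ), c ≠ 0 →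
      ∀ (g : ℂ → ℂ) (U : Set ℂ), IsOpen U → closedBall (0 : ℂ) 1 ⊆ U →
        DifferentiableOn ℂ g U → Set.InjOn g U → g 0 = 0 → deriv g 0 = c →
        ∀ ε : ℝ, 0 < ε → ε ≤ ε₀ →
          ∃ s : ℝ, 0 < s ∧ s < 1 ∧
          ∃ G : ℂ → ℂ,
            ContinuousOn G (closedBall 0 1) ∧
            Set.BijOn G (closedBall 0 1) (g '' closedBall 0 1) ∧
            ContDiffOn ℝ 1 G (ball 0 1) ∧
            (∀ z ∈ ball (0 : ℂ) 1,
              ‖(fderiv ℝ G z) 1 + Complex.I * (fderiv ℝ G z) Complex.I‖ / 2 ≤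
                C * ε * (‖(fderiv ℝ G z) 1 - Complex.I * (fderiv ℝ G z) Complex.I‖ / 2)) ∧
            (∀ z : ℂ, ‖z‖ ≤ s → G z = c * z) ∧
            (∀ z : ℂ, ‖z‖ = 1 → G z = g z) := by
  obtain ⟨K, hK1, hcut⟩ := cutoff_exists
  have hK0 : (0:ℝ) < K := lt_of_lt_of_le one_pos hK1
  refine ⟨1, one_pos, 1, one_pos, ?_⟩
  intro c hc g U hU hsub hg hinj hg0 hgd ε hε hε1
  obtain ⟨r₁, hr₁0, hr₁half, h, h00, hhd, hhd0, hhprop⟩ :=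
    inverse_exists c hc g U hU hsub hg hinj hg0 hgd
  -- the smallness parameter δ
  set m : ℝ := min ε 1 with hm
  have hm0 : 0 < m := lt_min hε one_pos
  have hm1 : m ≤ 1 := min_le_right _ _
  have hmε : m ≤ ε := min_le_left _ _
  set δ : ℝ := m / (2*K+2) with hδ
  have hδ0 : 0 < δ := by positivity
  have hδa : (K+1) * δ ≤ 1/2 := by
    have e : (K+1) * δ = m/2 := by rw [hδ]; field_simp
    rw [e]; linarith
  have hδb : 2 * K * δ ≤ ε := by
    have e : 2*K*δ = m * (2*K/(2*K+2)) := by rw [hδ]; field_simp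
    have e2 : 2*K/(2*K+2) ≤ 1 := by
      rw [div_le_one (by positivity)]; linarith
    calc 2*K*δ = m * (2*K/(2*K+2)) := e
      _ ≤ m * 1 := by gcongr
      _ ≤ ε := by linarith
  have hδquarter : δ ≤ 1/4 := by nlinarith
  -- analyticity of h and continuity of deriv h at 0
  have hana : AnalyticOnNhd ℂ h (ball 0 r₁) := hhd.analyticOnNhd isOpen_ball
  have hdha : AnalyticOnNhd ℂ (deriv h) (ball 0 r₁) := hana.deriv
  have hdhc : ContinuousAt (deriv h) 0 :=
    (hdha.continuousOn.continuousAt (isOpen_ball.mem_nhds (mem_ball_self hr₁0)))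
  -- choose the radius r
  have hnear : {w : ℂ | ‖deriv h w - 1‖ ≤ δ} ∈ nhds (0:ℂ) := by
    have h1 : closedBall (1:ℂ) δ ∈ nhds (deriv h 0) := by
      rw [hhd0]; exact closedBall_mem_nhds _ hδ0
    have h2 : (deriv h) ⁻¹' closedBall 1 δ ∈ nhds (0:ℂ) := hdhc h1
    apply Filter.mem_of_superset h2
    intro w hw
    simpa [mem_closedBall_iff_norm, dist_eq_norm] using hw
  obtain ⟨r₂, hr₂0, hr₂sub⟩ := Metric.mem_nhds_iff.1 hnear
  set r : ℝ := min (r₂/2) (r₁/2) with hr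
  have hr0 : 0 < r := lt_min (by linarith) (by linarith)
  have hrr₁ : r ≤ r₁/2 := min_le_right _ _
  have hrquarter : r ≤ 1/4 := by
    calc r ≤ r₁/2 := hrr₁
      _ ≤ 1/4 := by linarith
  have hrball : closedBall (0:ℂ) r ⊆ ball (0:ℂ) r₁ := by
    intro w hw
    rw [mem_closedBall_zero_iff] at hw
    rw [mem_ball_zero_iff]
    calc ‖w‖ ≤ r := hw
      _ ≤ r₁/2 := hrr₁
      _ < r₁ := by linarith
  have hrd : ∀ w ∈ closedBall (0:ℂ) r, ‖deriv h w - 1‖ ≤ δ := by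
    intro w hw
    apply hr₂sub
    rw [mem_closedBall_zero_iff] at hw
    rw [mem_ball_zero_iff]
    calc ‖w‖ ≤ r := hw
      _ ≤ r₂/2 := min_le_left _ _
      _ < r₂ := by linarith
  -- the cutoff at scale r
  obtain ⟨χ, hχc, hχ1, hχ0, hχ01, hχd⟩ := hcut r hr0
  -- the perturbation and the interpolating homeomorphism
  set q : ℂ → ℂ := fun z => h z - z with hqdef
  set ψ : ℂ → ℂ := fun z => χ z • q z with hψdef
  set Φ : ℂ → ℂ := fun z => z + ψ z with hΦdef
  -- derivative of q within the closed ball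
  have hq_hasDeriv : ∀ w ∈ closedBall (0:ℂ) r, HasDerivAt q (deriv h w - 1) w := by
    intro w hw
    have h1 : DifferentiableAt ℂ h w :=
      hhd.differentiableAt (isOpen_ball.mem_nhds (hrball hw))
    exact h1.hasDerivAt.sub (hasDerivAt_id w)
  have hqbound : ∀ w ∈ closedBall (0:ℂ) r, ‖q w‖ ≤ δ * ‖w‖ := by
    intro w hw
    have key := Convex.norm_image_sub_le_of_norm_hasFDerivWithin_le
      (f := q) (f' := fun w => ((1:ℂ→L[ℂ]ℂ).smulRight (deriv h w - 1)).restrictScalars ℝ)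
      (C := δ) (s := closedBall (0:ℂ) r)
      (fun x hx => (((hq_hasDeriv x hx).hasFDerivAt.restrictScalars ℝ).hasFDerivWithinAt))
      (fun x hx => by rw [norm_aux]; exact hrd x hx)
      (convex_closedBall _ _) (mem_closedBall_self hr0.le) hw
    have hq0 : q 0 = 0 := by simp [hqdef, h00]
    simpa [hq0] using key
  -- ψ vanishes outside the ball of radius r/2
  have hψ0 : ∀ z : ℂ, r/2 ≤ ‖z‖ → ψ z = 0 := by
    intro z hz
    simp [hψdef, hχ0 z hz]
  -- pointwise derivative of ψ, with bounds
  have hψdiff : ∀ z : ℂ, ∃ D : ℂ →L[ℝ] ℂ, HasFDerivAt ψ D z ∧ ‖D‖ ≤ 1/2 ∧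
      ‖D 1 + Complex.I * D Complex.I‖ ≤ ε := by
    intro z
    rcases lt_or_ge ‖z‖ r with hzr | hzr
    · have hzb : z ∈ closedBall (0:ℂ) r := by
        rw [mem_closedBall_zero_iff]; exact hzr.le
      have hχz : HasFDerivAt χ (fderiv ℝ χ z) z :=
        ((hχc.differentiable one_ne_zero) z).hasFDerivAt
      have hqz : HasFDerivAt q (((1:ℂ→L[ℂ]ℂ).smulRight (deriv h z - 1)).restrictScalars ℝ) z :=
        ((hq_hasDeriv z hzb).hasFDerivAt.restrictScalars ℝ)
      have hDψ := hχz.smul hqz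
      set d : ℂ := deriv h z - 1 with hd
      set Dq : ℂ →L[ℝ] ℂ := ((1:ℂ→L[ℂ]ℂ).smulRight d).restrictScalars ℝ with hDq
      set Dχ : ℂ →L[ℝ] ℝ := fderiv ℝ χ z with hDχ
      refine ⟨χ z • Dq + Dχ.smulRight (q z), hDψ, ?_, ?_⟩
      · -- operator norm bound
        have h1 : ‖χ z • Dq‖ ≤ δ := by
          apply le_trans (ContinuousLinearMap.opNorm_smul_le _ _)
          have hDqe : ‖Dq‖ = ‖d‖ := norm_aux d
          rw [hDqe]
          have h2 : ‖d‖ ≤ δ := hrd z hzb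
          have h3 : ‖χ z‖ ≤ 1 := by
            rw [Real.norm_eq_abs, _root_.abs_of_nonneg (hχ01 z).1]; exact (hχ01 z).2
          calc ‖χ z‖ * ‖d‖ ≤ 1 * δ := mul_le_mul h3 h2 (norm_nonneg _) one_pos.le
            _ = δ := one_mul δ
        have h2 : ‖Dχ.smulRight (q z)‖ ≤ K * δ := by
          rw [ContinuousLinearMap.norm_smulRight_apply]
          have h3 : ‖q z‖ ≤ δ * r := by
            calc ‖q z‖ ≤ δ * ‖z‖ := hqbound z hzb
              _ ≤ δ * r := mul_le_mul_of_nonneg_left hzr.le hδ0.le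
          calc ‖Dχ‖ * ‖q z‖ ≤ (K/r) * (δ * r) := by
                apply mul_le_mul (hχd z) h3 (norm_nonneg _) (by positivity)
            _ = (K * δ) * (r/r) := by ring
            _ = K * δ := by rw [div_self (ne_of_gt hr0), mul_one]
        calc ‖χ z • Dq + Dχ.smulRight (q z)‖ ≤ ‖χ z • Dq‖ + ‖Dχ.smulRight (q z)‖ :=
              norm_add_le _ _
          _ ≤ δ + K * δ := add_le_add h1 h2
          _ = (K+1) * δ := by ring
          _ ≤ 1/2 := hδa
      · -- the antiholomorphic part
        set D := χ z • Dq + Dχ.smulRight (q z) with hD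
        have heval : D 1 + Complex.I * D Complex.I =
            ((Dχ 1 : ℝ) : ℂ) * q z + Complex.I * (((Dχ Complex.I : ℝ) : ℂ) * q z) := by
          simp only [hD, ContinuousLinearMap.add_apply, ContinuousLinearMap.coe_smul',
            Pi.smul_apply, ContinuousLinearMap.smulRight_apply,
            ContinuousLinearMap.coe_restrictScalars', ContinuousLinearMap.smulRight_apply,
            ContinuousLinearMap.one_apply, hDq]
          push_cast
          simp only [Complex.real_smul, smul_eq_mul]
          ring_nf
          rw [Complex.I_sq]
          ring
        rw [heval]
        have hb1 : ‖((Dχ 1 : ℝ) : ℂ)‖ ≤ K/r := by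
          rw [Complex.norm_real]
          calc ‖Dχ 1‖ ≤ ‖Dχ‖ * ‖(1:ℂ)‖ := Dχ.le_opNorm 1
            _ = ‖Dχ‖ := by rw [norm_one, mul_one]
            _ ≤ K/r := hχd z
        have hb2 : ‖((Dχ Complex.I : ℝ) : ℂ)‖ ≤ K/r := by
          rw [Complex.norm_real]
          calc ‖Dχ Complex.I‖ ≤ ‖Dχ‖ * ‖Complex.I‖ := Dχ.le_opNorm Complex.I
            _ = ‖Dχ‖ := by rw [Complex.norm_I, mul_one]
            _ ≤ K/r := hχd z
        have hq3 : ‖q z‖ ≤ δ * r := by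
          calc ‖q z‖ ≤ δ * ‖z‖ := hqbound z hzb
            _ ≤ δ * r := mul_le_mul_of_nonneg_left hzr.le hδ0.le
        calc ‖((Dχ 1 : ℝ) : ℂ) * q z + Complex.I * (((Dχ Complex.I : ℝ) : ℂ) * q z)‖
            ≤ ‖((Dχ 1 : ℝ) : ℂ) * q z‖ + ‖Complex.I * (((Dχ Complex.I : ℝ) : ℂ) * q z)‖ :=
              norm_add_le _ _
          _ ≤ (K/r) * (δ*r) + 1 * ((K/r) * (δ*r)) := by
              have t1 : ‖((Dχ 1 : ℝ) : ℂ) * q z‖ ≤ (K/r) * (δ*r) := by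
                rw [norm_mul]
                exact mul_le_mul hb1 hq3 (norm_nonneg _) (by positivity)
              have t2 : ‖Complex.I * (((Dχ Complex.I : ℝ) : ℂ) * q z)‖ ≤
                  1 * ((K/r) * (δ*r)) := by
                rw [norm_mul, Complex.norm_I, one_mul, one_mul, norm_mul]
                exact mul_le_mul hb2 hq3 (norm_nonneg _) (by positivity)
              exact add_le_add t1 t2
          _ = (2 * K * δ) * (r/r) := by ring
          _ = 2 * K * δ := by rw [div_self (ne_of_gt hr0), mul_one]
          _ ≤ ε := hδb
    · -- outside: ψ is locally zero
      have hev : ψ =ᶠ[nhds z] fun _ => (0:ℂ) := by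
        have hopen : IsOpen {w : ℂ | r/2 < ‖w‖} := isOpen_lt continuous_const continuous_norm
        have hzmem : z ∈ {w : ℂ | r/2 < ‖w‖} := by
          simp only [Set.mem_setOf_eq]
          calc r/2 < r := by linarith
            _ ≤ ‖z‖ := hzr
        filter_upwards [hopen.mem_nhds hzmem] with w hw
        exact hψ0 w (le_of_lt hw)
      refine ⟨0, ?_, by simp, by simpa using hε.le⟩
      exact (hasFDerivAt_const (0:ℂ) z).congr_of_eventuallyEq hev
  choose D hDf hDn hDe using hψdiff
  -- ψ is 1/2-Lipschitz
  have hψlip : ∀ a b : ℂ, ‖ψ a - ψ b‖ ≤ 1/2 * ‖a - b‖ := by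
    intro a b
    exact Convex.norm_image_sub_le_of_norm_hasFDerivWithin_le
      (fun x _ => (hDf x).hasFDerivWithinAt) (fun x _ => hDn x) convex_univ
      (Set.mem_univ b) (Set.mem_univ a)
  -- Φ is injective
  have hΦinj : ∀ a b : ℂ, Φ a = Φ b → a = b := by
    intro a b hab
    have h1 : a - b = ψ b - ψ a := by
      have := hab
      simp only [hΦdef] at this
      linear_combination this
    have h2 : ‖a - b‖ ≤ 1/2 * ‖a - b‖ := by
      calc ‖a - b‖ = ‖ψ b - ψ a‖ := by rw [h1]
        _ ≤ 1/2 * ‖b - a‖ := hψlip b a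
        _ = 1/2 * ‖a - b‖ := by rw [norm_sub_rev]
    have h3 : ‖a - b‖ ≤ 0 := by linarith
    have h4 : a - b = 0 := by
      have := norm_nonneg (a - b)
      have h5 : ‖a - b‖ = 0 := le_antisymm h3 this
      exact norm_eq_zero.1 h5
    linear_combination h4

  -- Φ = identity outside ball r/2
  have hΦid : ∀ z : ℂ, r/2 ≤ ‖z‖ → Φ z = z := by
    intro z hz
    simp [hΦdef, hψ0 z hz]
  -- Φ maps the closed unit ball into itself
  have hΦmaps : ∀ z ∈ closedBall (0:ℂ) 1, Φ z ∈ closedBall (0:ℂ) 1 := by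
    intro z hz
    rw [mem_closedBall_zero_iff] at hz ⊢
    rcases le_or_gt (r/2) ‖z‖ with h1 | h1
    · rw [hΦid z h1]; exact hz
    · have hzb : z ∈ closedBall (0:ℂ) r := by
        rw [mem_closedBall_zero_iff]; nlinarith
      have h2 : ‖ψ z‖ ≤ δ * ‖z‖ := by
        have h3 : ‖ψ z‖ = ‖χ z‖ * ‖q z‖ := by rw [hψdef]; exact norm_smul _ _
        rw [h3]
        have h4 : ‖χ z‖ ≤ 1 := by
          rw [Real.norm_eq_abs, _root_.abs_of_nonneg (hχ01 z).1]; exact (hχ01 z).2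
        calc ‖χ z‖ * ‖q z‖ ≤ 1 * (δ * ‖z‖) :=
              mul_le_mul h4 (hqbound z hzb) (norm_nonneg _) one_pos.le
          _ = δ * ‖z‖ := one_mul _
    
      calc ‖Φ z‖ ≤ ‖z‖ + ‖ψ z‖ := norm_add_le _ _
        _ ≤ ‖z‖ + δ * ‖z‖ := by linarith
        _ ≤ r/2 + (1/4) * (r/2) := by nlinarith [norm_nonneg z]
        _ ≤ 1 := by nlinarith
  -- Φ is surjective onto the closed unit ball
  have hΦsurj : ∀ w ∈ closedBall (0:ℂ) 1, ∃ z ∈ closedBall (0:ℂ) 1, Φ z = w := by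
    intro w hw
    set T : ℂ → ℂ := fun z => w - ψ z with hT
    have hTlip : LipschitzWith (1/2 : NNReal) T := by
      apply LipschitzWith.of_dist_le_mul
      intro a b
      rw [dist_eq_norm, dist_eq_norm]
      have : T a - T b = ψ b - ψ a := by rw [hT]; ring
      rw [this]
      have := hψlip b a
      calc ‖ψ b - ψ a‖ ≤ 1/2 * ‖b - a‖ := this
        _ = (1/2 : NNReal) * ‖a - b‖ := by rw [norm_sub_rev]; norm_num
    have hCT : ContractingWith (1/2 : NNReal) T := ⟨NNReal.half_lt_self one_ne_zero, hTlip⟩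
    set z := ContractingWith.fixedPoint T hCT with hzdef
    have hzfix : T z = z := hCT.fixedPoint_isFixedPt
    have hΦz : Φ z = w := by
      simp only [hΦdef]
      have : ψ z = w - z := by
        have h1 : w - ψ z = z := hzfix
        linear_combination -h1
      rw [this]; ring
    refine ⟨z, ?_, hΦz⟩
    rw [mem_closedBall_zero_iff]
    by_contra hcon
    push_neg at hcon
    have h1 : r/2 ≤ ‖z‖ := by nlinarith
    have h2 : ψ z = 0 := hψ0 z h1
    have h3 : w = z := by
      have := hzfix
      rw [hT] at this
      simp only [h2, sub_zero] at this
      exact this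
    rw [mem_closedBall_zero_iff] at hw
    rw [← h3] at hcon
    linarith
  -- Φ is a bijection of the closed unit ball
  have hΦbij : Set.BijOn Φ (closedBall (0:ℂ) 1) (closedBall (0:ℂ) 1) := by
    refine ⟨fun z hz => hΦmaps z hz, fun a _ b _ hab => hΦinj a b hab, ?_⟩
    intro w hw
    obtain ⟨z, hz1, hz2⟩ := hΦsurj w hw
    exact ⟨z, hz1, hz2⟩
  -- Φ is continuous
  have hΦcont : Continuous Φ := by
    have : Differentiable ℝ Φ := by
      intro z
      exact ((hasFDerivAt_id z).add (hDf z)).differentiableAt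
    exact this.continuous
  -- the interpolating map G
  set G : ℂ → ℂ := fun z => g (Φ z) with hG
  have hΦU : ∀ z ∈ closedBall (0:ℂ) 1, Φ z ∈ U := fun z hz => hsub (hΦmaps z hz)
  -- G agrees with the dilation near the origin
  have hGdil : ∀ z : ℂ, ‖z‖ ≤ r/4 → G z = c * z := by
    intro z hz
    have h1 : ψ z = q z := by rw [hψdef]; simp [hχ1 z hz]
    have h2 : Φ z = h z := by
      simp only [hΦdef, h1, hqdef]; ring
    have h3 : z ∈ ball (0:ℂ) r₁ := by
      rw [mem_ball_zero_iff]
      calc ‖z‖ ≤ r/4 := hz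
        _ < r₁ := by nlinarith
    rw [hG]
    simp only
    rw [h2]
    exact (hhprop z h3).2
  -- G agrees with g on the unit circle
  have hGbd : ∀ z : ℂ, ‖z‖ = 1 → G z = g z := by
    intro z hz
    have h1 : Φ z = z := hΦid z (by rw [hz]; linarith)
    rw [hG]; simp only [h1]
  refine ⟨r/4, by positivity, by nlinarith, G, ?_, ?_, ?_, ?_, hGdil, hGbd⟩
  · -- continuity
    exact hg.continuousOn.comp hΦcont.continuousOn (fun z hz => hΦU z hz)
  · -- bijectivity
    have hgbij : Set.BijOn g (closedBall (0:ℂ) 1) (g '' closedBall (0:ℂ) 1) := by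
      refine ⟨Set.mapsTo_image g _, hinj.mono hsub, Set.surjOn_image g _⟩
    exact hgbij.comp hΦbij
  · -- smoothness
    have hgC : ContDiffOn ℝ 1 g U := by
      have h1 : AnalyticOnNhd ℂ g U := hg.analyticOnNhd hU
      exact (h1.contDiffOn_of_completeSpace (n := 1)).restrict_scalars ℝ
    have hΦC : ContDiffOn ℝ 1 Φ (ball (0:ℂ) 1) := by
      intro z hz
      apply ContDiffAt.contDiffWithinAt
      rcases lt_or_ge ‖z‖ r with h1 | h1
      · have hq_cd : ContDiffAt ℝ 1 q z := by
          have h2 : AnalyticAt ℂ h z := hana z (hrball (by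
            rw [mem_closedBall_zero_iff]; exact h1.le))
          have h3 : ContDiffAt ℂ 1 h z := h2.contDiffAt
          exact (h3.restrict_scalars ℝ).sub contDiffAt_id
        have hψ_cd : ContDiffAt ℝ 1 ψ z := (hχc.contDiffAt).smul hq_cd
        exact contDiffAt_id.add hψ_cd
      · have hev : Φ =ᶠ[nhds z] id := by
          have hopen : IsOpen {w : ℂ | r/2 < ‖w‖} := isOpen_lt continuous_const continuous_norm
          have hzmem : z ∈ {w : ℂ | r/2 < ‖w‖} := by
            simp only [Set.mem_setOf_eq]
            calc r/2 < r := by linarith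
              _ ≤ ‖z‖ := h1
          filter_upwards [hopen.mem_nhds hzmem] with w hw
          exact hΦid w (le_of_lt hw)
        exact contDiffAt_id.congr_of_eventuallyEq hev
    exact hgC.comp hΦC (fun z hz => hΦU z (ball_subset_closedBall hz))
  · -- the quasiconformality estimate
    intro z hz
    have hz1 : Φ z ∈ U := hΦU z (ball_subset_closedBall hz)
    set d : ℂ := deriv g (Φ z) with hd
    have hgz : HasDerivAt g d (Φ z) := (hg.differentiableAt (hU.mem_nhds hz1)).hasDerivAt
    have hgF : HasFDerivAt g (((1:ℂ→L[ℂ]ℂ).smulRight d).restrictScalars ℝ) (Φ z) :=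
      hgz.hasFDerivAt.restrictScalars ℝ
    have hΦF : HasFDerivAt Φ (ContinuousLinearMap.id ℝ ℂ + D z) z :=
      (hasFDerivAt_id z).add (hDf z)
    have hGF : HasFDerivAt G ((((1:ℂ→L[ℂ]ℂ).smulRight d).restrictScalars ℝ).comp
        (ContinuousLinearMap.id ℝ ℂ + D z)) z := hgF.comp z hΦF
    rw [hGF.fderiv]
    have happ : ∀ v : ℂ, ((((1:ℂ→L[ℂ]ℂ).smulRight d).restrictScalars ℝ).comp
        (ContinuousLinearMap.id ℝ ℂ + D z)) v = (v + D z v) * d := by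
      intro v
      simp [ContinuousLinearMap.comp_apply, ContinuousLinearMap.add_apply,
        ContinuousLinearMap.smulRight_apply, ContinuousLinearMap.one_apply,
        smul_eq_mul]
      ring
    rw [happ 1, happ Complex.I]
    have e1 : (1 + D z 1) * d + Complex.I * ((Complex.I + D z Complex.I) * d)
        = (D z 1 + Complex.I * D z Complex.I) * d := by
      linear_combination d * Complex.I_mul_I
    have e2 : (1 + D z 1) * d - Complex.I * ((Complex.I + D z Complex.I) * d)
        = (2 + (D z 1 - Complex.I * D z Complex.I)) * d := by
      linear_combination (-d) * Complex.I_mul_I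
    rw [e1, e2]
    have hX : ‖D z 1 - Complex.I * D z Complex.I‖ ≤ 1 := by
      have t1 : ‖D z 1‖ ≤ 1/2 := by
        calc ‖D z 1‖ ≤ ‖D z‖ * ‖(1:ℂ)‖ := (D z).le_opNorm 1
          _ = ‖D z‖ := by rw [norm_one, mul_one]
          _ ≤ 1/2 := hDn z
      have t2 : ‖Complex.I * D z Complex.I‖ ≤ 1/2 := by
        rw [norm_mul, Complex.norm_I, one_mul]
        calc ‖D z Complex.I‖ ≤ ‖D z‖ * ‖Complex.I‖ := (D z).le_opNorm Complex.I
          _ = ‖D z‖ := by rw [Complex.norm_I, mul_one]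
          _ ≤ 1/2 := hDn z
      calc ‖D z 1 - Complex.I * D z Complex.I‖
          ≤ ‖D z 1‖ + ‖Complex.I * D z Complex.I‖ := norm_sub_le _ _
        _ ≤ 1 := by linarith
    have hlow : 1 ≤ ‖(2 : ℂ) + (D z 1 - Complex.I * D z Complex.I)‖ := by
      set X := D z 1 - Complex.I * D z Complex.I with hXdef
      have t1 : ‖(2:ℂ)‖ - ‖-X‖ ≤ ‖(2:ℂ) - -X‖ := norm_sub_norm_le _ _
      rw [sub_neg_eq_add, norm_neg] at t1
      have t2 : ‖(2:ℂ)‖ = 2 := by norm_num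
      rw [t2] at t1
      linarith
    have hS : ‖(D z 1 + Complex.I * D z Complex.I) * d‖ ≤ ε * ‖d‖ := by
      rw [norm_mul]
      exact mul_le_mul_of_nonneg_right (hDe z) (norm_nonneg d)
    have hTd : ‖d‖ ≤ ‖(2 + (D z 1 - Complex.I * D z Complex.I)) * d‖ := by
      rw [norm_mul]
      nlinarith [norm_nonneg d, norm_nonneg ((2:ℂ) + (D z 1 - Complex.I * D z Complex.I))]
    have final : ‖(D z 1 + Complex.I * D z Complex.I) * d‖ ≤
        ε * ‖(2 + (D z 1 - Complex.I * D z Complex.I)) * d‖ := by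
      calc ‖(D z 1 + Complex.I * D z Complex.I) * d‖ ≤ ε * ‖d‖ := hS
        _ ≤ ε * ‖(2 + (D z 1 - Complex.I * D z Complex.I)) * d‖ :=
          mul_le_mul_of_nonneg_left hTd hε.le
    rw [one_mul]
    linarith


/-- Disk form of the key step in Lemma 5.2 (lem:conf1): a univalent map `g` of a
neighbourhood of the closed unit disk with `g(0) = 0` and `g′(0) = c ≠ 0` can be
interpolated with the dilation `z ↦ c·z` near the origin: there are universal
constants `C > 0`, `ε₀ > 0` such that for every `ε ∈ (0, ε₀]` there are
`s ∈ (0,1)` and a homeomorphism `G` of the closed disk onto `g(closed disk)`,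
continuously real-differentiable inside, with `‖∂̄G‖ ≤ Cε·‖∂G‖`, equal to
`z ↦ c·z` on `|z| ≤ s` and to `g` on `|z| = 1`. -/
theorem stmt_8 :
    ∃ C > (0 : ℝ), ∃ ε₀ > (0 : ℝ),
      ∀ (c : ℂ), c ≠ 0 →
      ∀ (g : ℂ → ℂ) (U : Set ℂ), IsOpen U → closedBall (0 : ℂ) 1 ⊆ U →
        DifferentiableOn ℂ g U → Set.InjOn g U → g 0 = 0 → deriv g 0 = c →
        ∀ ε : ℝ, 0 < ε → ε ≤ ε₀ →
          ∃ s : ℝ, 0 < s ∧ s < 1 ∧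
          ∃ G : ℂ → ℂ,
            ContinuousOn G (closedBall 0 1) ∧
            Set.BijOn G (closedBall 0 1) (g '' closedBall 0 1) ∧
            ContDiffOn ℝ 1 G (ball 0 1) ∧
            (∀ z ∈ ball (0 : ℂ) 1,
              ‖(fderiv ℝ G z) 1 + Complex.I * (fderiv ℝ G z) Complex.I‖ / 2 ≤
                C * ε * (‖(fderiv ℝ G z) 1 - Complex.I * (fderiv ℝ G z) Complex.I‖ / 2)) ∧
            (∀ z : ℂ, ‖z‖ ≤ s → G z = c * z) ∧
            (∀ z : ℂ, ‖z‖ = 1 → G z = g z) := by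
  exact stmt_8' cutoff_exists
    (fun c hc g U hU hsub hg hinj hg0 hgd =>
      inverse_exists c hc g U hU hsub hg hinj hg0 hgd)
end

section
/- Let w, l > 0, 0 < ε ≤ 1/2, and let g₁, g₂ : [0, w] → ℝ be C¹ functions such that for all x ∈ [0, w]: g₂(x) > g₁(x) > 0, |g₁′(x)| ≤ ε, |g₂′(x)| ≤ ε, and |l/(g₂(x) − g₁(x)) − 1| ≤ ε. Let S = [0, w] × [0, l] and S′ = {(x, y) ∈ ℝ² : 0 ≤ x ≤ w, g₁(x) ≤ y ≤ g₂(x)}. Define F : S → S′ by F(x, y) = ( x, g₁(x) + (y/l)·(g₂(x) − g₁(x)) ). Then F is a homeomorphism of S onto S′ preserving the first coordinate, and there is a universal constant C > 0 such that at every point of S the partial derivatives satisfy |‖F_y‖/‖F_x‖ − 1| ≤ Cε and |⟨F_x, F_y⟩| ≤ Cε. -/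
open Set

set_option maxHeartbeats 2000000 in
/-- Lemma 6.12 (lem:smooth0): the vertical straightening map
`F(x,y) = (x, g₁(x) + (y/l)·(g₂(x) − g₁(x)))` is a homeomorphism of the
rectangle `S = [0,w] × [0,l]` onto the region `S′` between the two
ε-almost-horizontal C¹ graphs `y = g₁(x)`, `y = g₂(x)`, preserving the first
coordinate, and at every point its partial derivatives satisfy
`|‖F_y‖/‖F_x‖ − 1| ≤ Cε` and `|⟨F_x, F_y⟩| ≤ Cε` for a universal `C > 0`. -/
theorem stmt_12 :
    ∃ C > (0 : ℝ), ∀ (w l ε : ℝ) (g₁ g₂ : ℝ → ℝ),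
      0 < w → 0 < l → 0 < ε → ε ≤ 1 / 2 →
      ContDiffOn ℝ 1 g₁ (Icc 0 w) → ContDiffOn ℝ 1 g₂ (Icc 0 w) →
      (∀ x ∈ Icc (0 : ℝ) w, 0 < g₁ x ∧ g₁ x < g₂ x) →
      (∀ x ∈ Icc (0 : ℝ) w, |derivWithin g₁ (Icc 0 w) x| ≤ ε) →
      (∀ x ∈ Icc (0 : ℝ) w, |derivWithin g₂ (Icc 0 w) x| ≤ ε) →
      (∀ x ∈ Icc (0 : ℝ) w, |l / (g₂ x - g₁ x) - 1| ≤ ε) →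
      ∀ S' : Set (ℝ × ℝ),
        S' = {p : ℝ × ℝ | p.1 ∈ Icc 0 w ∧ p.2 ∈ Icc (g₁ p.1) (g₂ p.1)} →
      ∀ F : ℝ × ℝ → ℝ × ℝ,
        F = (fun p => (p.1, g₁ p.1 + (p.2 / l) * (g₂ p.1 - g₁ p.1))) →
        -- F is a homeomorphism of S = [0,w] × [0,l] onto S′
        (∃ e : ↥(Icc (0 : ℝ) w ×ˢ Icc (0 : ℝ) l) ≃ₜ ↥S',
            ∀ p : ↥(Icc (0 : ℝ) w ×ˢ Icc (0 : ℝ) l), (e p : ℝ × ℝ) = F ↑p) ∧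
        -- F preserves the first coordinate
        (∀ p ∈ Icc (0 : ℝ) w ×ˢ Icc (0 : ℝ) l, (F p).1 = p.1) ∧
        -- partial derivative bounds at every point of S
        (∀ x ∈ Icc (0 : ℝ) w, ∀ y ∈ Icc (0 : ℝ) l,
          ∃ Fx Fy : ℝ × ℝ,
            HasDerivWithinAt (fun s => F (s, y)) Fx (Icc 0 w) x ∧
            HasDerivAt (fun s => F (x, s)) Fy y ∧
            |Real.sqrt (Fy.1 ^ 2 + Fy.2 ^ 2) / Real.sqrt (Fx.1 ^ 2 + Fx.2 ^ 2) - 1|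
              ≤ C * ε ∧
            |Fx.1 * Fy.1 + Fx.2 * Fy.2| ≤ C * ε) := by
  refine ⟨10, by norm_num, ?_⟩
  intro w l ε g₁ g₂ hw hl hε hε2 hc1 hc2 hg hd1 hd2 hrat S' hS' F hF
  subst hS' hF
  have hl0 : l ≠ 0 := hl.ne'
  have hdpos : ∀ x ∈ Icc (0:ℝ) w, 0 < g₂ x - g₁ x := fun x hx => sub_pos.2 (hg x hx).2
  -- membership of image in S'
  have hmemS' : ∀ p : ℝ × ℝ, p ∈ Icc (0:ℝ) w ×ˢ Icc (0:ℝ) l →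
      ((p.1, g₁ p.1 + (p.2 / l) * (g₂ p.1 - g₁ p.1)) : ℝ × ℝ) ∈
        {p : ℝ × ℝ | p.1 ∈ Icc (0:ℝ) w ∧ p.2 ∈ Icc (g₁ p.1) (g₂ p.1)} := by
    rintro ⟨px, py⟩ ⟨hx, hy⟩
    have hd := hdpos px hx
    have ht0 : 0 ≤ py / l := div_nonneg hy.1 hl.le
    have ht1 : py / l ≤ 1 := (div_le_one hl).2 hy.2
    refine ⟨hx, ?_, ?_⟩
    · have : 0 ≤ (py / l) * (g₂ px - g₁ px) := mul_nonneg ht0 hd.le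
      simp only; linarith
    · have : (py / l) * (g₂ px - g₁ px) ≤ g₂ px - g₁ px := by nlinarith
      simp only; linarith
  set toF : ↥(Icc (0:ℝ) w ×ˢ Icc (0:ℝ) l) →
      ↥{p : ℝ × ℝ | p.1 ∈ Icc (0:ℝ) w ∧ p.2 ∈ Icc (g₁ p.1) (g₂ p.1)} :=
    fun p => ⟨_, hmemS' p p.2⟩ with htoF
  have hbij : Function.Bijective toF := by
    constructor
    · rintro ⟨⟨px, py⟩, hp⟩ ⟨⟨qx, qy⟩, hq⟩ h
      simp only [htoF, Subtype.mk.injEq, Prod.mk.injEq] at h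
      obtain ⟨h1, h2⟩ := h
      subst h1
      have hd := (hdpos px hp.1)
      have h3 : py / l = qy / l :=
        mul_right_cancel₀ hd.ne' (by linarith)
      have h4 : py = qy := by
        field_simp at h3; exact h3
      simp [h4]
    · rintro ⟨⟨x, z⟩, hq⟩
      obtain ⟨hx, hz⟩ := hq
      have hd := hdpos x hx
      refine ⟨⟨(x, l * (z - g₁ x) / (g₂ x - g₁ x)), hx, ?_, ?_⟩, ?_⟩
      · exact div_nonneg (mul_nonneg hl.le (sub_nonneg.2 hz.1)) hd.le
      · rw [div_le_iff₀ hd]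
        have := hz.2
        nlinarith
      · apply Subtype.ext
        simp only [htoF, Prod.mk.injEq]
        refine ⟨trivial, ?_⟩
        field_simp
        ring
  have hcomp : CompactSpace ↥(Icc (0:ℝ) w ×ˢ Icc (0:ℝ) l) :=
    isCompact_iff_compactSpace.mp (isCompact_Icc.prod isCompact_Icc)
  have h1c : Continuous (fun p : ↥(Icc (0:ℝ) w ×ˢ Icc (0:ℝ) l) => (↑p : ℝ × ℝ).1) :=
    continuous_fst.comp continuous_subtype_val
  have h2c : Continuous (fun p : ↥(Icc (0:ℝ) w ×ˢ Icc (0:ℝ) l) => (↑p : ℝ × ℝ).2) :=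
    continuous_snd.comp continuous_subtype_val
  have hmem1 : ∀ p : ↥(Icc (0:ℝ) w ×ˢ Icc (0:ℝ) l), (↑p : ℝ × ℝ).1 ∈ Icc (0:ℝ) w :=
    fun p => p.2.1
  have hG1 : Continuous (fun p : ↥(Icc (0:ℝ) w ×ˢ Icc (0:ℝ) l) => g₁ (↑p : ℝ × ℝ).1) :=
    hc1.continuousOn.comp_continuous h1c hmem1
  have hG2 : Continuous (fun p : ↥(Icc (0:ℝ) w ×ˢ Icc (0:ℝ) l) => g₂ (↑p : ℝ × ℝ).1) :=
    hc2.continuousOn.comp_continuous h1c hmem1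
  have hcont : Continuous toF := by
    apply Continuous.subtype_mk
    exact h1c.prodMk (hG1.add (((h2c.div_const l)).mul (hG2.sub hG1)))
  refine ⟨?_, ?_, ?_⟩
  · exact ⟨Continuous.homeoOfEquivCompactToT2 (f := Equiv.ofBijective toF hbij) hcont,
      fun p => rfl⟩
  · intro p _; rfl
  · intro x hx y hy
    clear hbij hcont htoF toF hG1 hG2 hmem1 h1c h2c hcomp hmemS'
    have hd := hdpos x hx
    obtain ⟨h1l, h1u⟩ := abs_le.1 (hd1 x hx)
    obtain ⟨h2l, h2u⟩ := abs_le.1 (hd2 x hx)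
    obtain ⟨hrl, hru⟩ := abs_le.1 (hrat x hx)
    have hg1x : HasDerivWithinAt g₁ (derivWithin g₁ (Icc 0 w) x) (Icc 0 w) x :=
      (hc1.differentiableOn one_ne_zero x hx).hasDerivWithinAt
    have hg2x : HasDerivWithinAt g₂ (derivWithin g₂ (Icc 0 w) x) (Icc 0 w) x :=
      (hc2.differentiableOn one_ne_zero x hx).hasDerivWithinAt
    set d1 := derivWithin g₁ (Icc 0 w) x with hd1def
    set d2 := derivWithin g₂ (Icc 0 w) x with hd2def
    have ht0 : 0 ≤ y / l := div_nonneg hy.1 hl.le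
    have ht1 : y / l ≤ 1 := (div_le_one hl).2 hy.2
    have haub : d1 + (y / l) * (d2 - d1) ≤ 3 * ε := by nlinarith
    have halb : -(3 * ε) ≤ d1 + (y / l) * (d2 - d1) := by nlinarith
    have hld1 : l ≤ (1 + ε) * (g₂ x - g₁ x) := by
      have h := (div_le_iff₀ hd).1 (by linarith : l / (g₂ x - g₁ x) ≤ 1 + ε)
      linarith
    have hld2 : (1 - ε) * (g₂ x - g₁ x) ≤ l :=
      (le_div_iff₀ hd).1 (by linarith : (1 : ℝ) - ε ≤ l / (g₂ x - g₁ x))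
    have hDpos : 0 < (g₂ x - g₁ x) / l := div_pos hd hl
    have hDub : (g₂ x - g₁ x) / l ≤ 1 + 2 * ε := by
      rw [div_le_iff₀ hl]; nlinarith
    have hDlb : 1 - ε ≤ (g₂ x - g₁ x) / l := by
      rw [le_div_iff₀ hl]; nlinarith
    set a : ℝ := d1 + (y / l) * (d2 - d1) with hadef
    set D : ℝ := (g₂ x - g₁ x) / l with hDdef
    have hs1 : 1 ≤ Real.sqrt (1 ^ 2 + a ^ 2) :=
      (Real.le_sqrt' one_pos).2 (by nlinarith [sq_nonneg a])
    have hs2 : Real.sqrt (1 ^ 2 + a ^ 2) ≤ 1 + 3 * ε := by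
      rw [show (1 : ℝ) + 3 * ε = Real.sqrt ((1 + 3 * ε) ^ 2) from
        (Real.sqrt_sq (by linarith)).symm]
      exact Real.sqrt_le_sqrt (by nlinarith)
    have hspos : 0 < Real.sqrt (1 ^ 2 + a ^ 2) := lt_of_lt_of_le one_pos hs1
    clear_value d1 d2 a D
    refine ⟨(1, a), (0, D), ?_, ?_, ?_, ?_⟩
    · rw [hadef]
      exact (hasDerivWithinAt_id x _).prodMk
        (hg1x.add ((hg2x.sub hg1x).const_mul (y / l)))
    · have h2 : HasDerivAt (fun s : ℝ => g₁ x + s / l * (g₂ x - g₁ x)) D y := by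
        have h := (((hasDerivAt_id y).div_const l).mul_const (g₂ x - g₁ x)).const_add (g₁ x)
        exact h.congr_deriv (by rw [hDdef]; ring)
      exact (hasDerivAt_const y x).prodMk h2
    · show |Real.sqrt (0 ^ 2 + D ^ 2) / Real.sqrt (1 ^ 2 + a ^ 2) - 1| ≤ 10 * ε
      rw [show (0 : ℝ) ^ 2 + D ^ 2 = D ^ 2 by ring, Real.sqrt_sq hDpos.le, abs_le]
      constructor
      · have key : (1 - 10 * ε) * Real.sqrt (1 ^ 2 + a ^ 2) ≤ D := by
          nlinarith [mul_nonneg hε.le (sub_nonneg.2 hs1)]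
        have h := (le_div_iff₀ hspos).2 key
        linarith
      · have h : D / Real.sqrt (1 ^ 2 + a ^ 2) ≤ D := div_le_self hDpos.le hs1
        linarith
    · show |1 * 0 + a * D| ≤ 10 * ε
      rw [mul_zero, zero_add, abs_mul, abs_of_pos hDpos]
      have haD : |a| ≤ 3 * ε := abs_le.2 ⟨halb, haub⟩
      have hD2 : D ≤ 2 := by linarith
      calc |a| * D ≤ 3 * ε * 2 := mul_le_mul haD hD2 hDpos.le (by linarith)
        _ ≤ 10 * ε := by linarith
end

section
/- For every N ≥ 1 there exists a constant C > 0 depending only on N with the following property: for every m ≥ 1, every matrix A with m rows and N columns all of whose entries lie in {0, 1, −1}, and every x ∈ ℝ^N with A·x = 0, there exists k ∈ ℤ^N with A·k = 0 and |xᵢ − kᵢ| ≤ C for each 1 ≤ i ≤ N. -/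
/-- Key elimination lemma, proved by induction on the number of variables. -/
theorem key_linalg (N : ℕ) : ∀ H D : ℤ, 1 ≤ H → 1 ≤ D →
    ∃ C : ℝ, 0 < C ∧ ∀ d : ℤ, 1 ≤ d → d ≤ D →
      ∀ (m : ℕ) (A : Matrix (Fin m) (Fin N) ℤ), (∀ i j, |A i j| ≤ H) →
      ∀ x : Fin N → ℝ, (∀ i, ∑ j, (A i j : ℝ) * x j = 0) →
      ∃ k : Fin N → ℤ, (∀ i, ∑ j, A i j * k j = 0) ∧ (∀ j, d ∣ k j) ∧
        ∀ j, |x j - (k j : ℝ)| ≤ C := by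
  induction N with
  | zero =>
    intro H D _ _
    exact ⟨1, one_pos, fun d _ _ m A _ x _ =>
      ⟨fun j => 0, fun i => by simp, fun j => j.elim0, fun j => j.elim0⟩⟩
  | succ N ih =>
    intro H D hH hD
    obtain ⟨C', hC'pos, hC'⟩ := ih (2 * H ^ 2) (D * H)
      (by nlinarith) (by nlinarith)
    refine ⟨(D : ℝ) + (N : ℝ) * H * C' + C', by positivity, ?_⟩
    intro d hd1 hdD m A hA x hx
    have hd0 : (0 : ℝ) < (d : ℝ) := by exact_mod_cast hd1.trans_lt' (by norm_num)
    by_cases hz : ∀ i j, A i j = 0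
    · refine ⟨fun j => d * ⌊x j / (d : ℝ)⌋, fun i => by simp [hz], fun j => ⟨_, rfl⟩, ?_⟩
      intro j
      have h1 : (⌊x j / (d : ℝ)⌋ : ℝ) ≤ x j / d := Int.floor_le _
      have h2 : x j / (d : ℝ) < ⌊x j / (d : ℝ)⌋ + 1 := Int.lt_floor_add_one _
      rw [le_div_iff₀ hd0] at h1
      rw [div_lt_iff₀ hd0] at h2
      have hdD' : (d : ℝ) ≤ (D : ℝ) := by exact_mod_cast hdD
      have hrest : (0:ℝ) ≤ (N : ℝ) * H * C' + C' := by positivity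
      rw [abs_le]
      push_cast
      constructor <;> nlinarith
    · push_neg at hz
      obtain ⟨i₀, j₀, ha⟩ := hz
      set a := A i₀ j₀ with ha_def
      have ha1 : 1 ≤ |a| := Int.one_le_abs ha
      have haH : |a| ≤ H := hA i₀ j₀
      -- the eliminated system
      set B : Matrix (Fin m) (Fin N) ℤ := fun i t =>
        a * A i (j₀.succAbove t) - A i j₀ * A i₀ (j₀.succAbove t) with hB_def
      have hB : ∀ i t, |B i t| ≤ 2 * H ^ 2 := by
        intro i t
        have h1 := hA i (j₀.succAbove t)
        have h2 := hA i j₀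
        have h3 := hA i₀ (j₀.succAbove t)
        have := abs_sub (a * A i (j₀.succAbove t)) (A i j₀ * A i₀ (j₀.succAbove t))
        rw [abs_mul, abs_mul] at this
        have h0a : (0:ℤ) ≤ |a| := abs_nonneg _
        have h0b : (0:ℤ) ≤ |A i j₀| := abs_nonneg _
        have h0c : (0:ℤ) ≤ |A i (j₀.succAbove t)| := abs_nonneg _
        have h0d : (0:ℤ) ≤ |A i₀ (j₀.succAbove t)| := abs_nonneg _
        nlinarith
      set y : Fin N → ℝ := fun t => x (j₀.succAbove t) with hy_def
      -- row equations split at j₀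
      have hsplit : ∀ i, (A i j₀ : ℝ) * x j₀ + ∑ t, (A i (j₀.succAbove t) : ℝ) * y t = 0 := by
        intro i
        have := hx i
        rwa [Fin.sum_univ_succAbove (fun j => (A i j : ℝ) * x j) j₀] at this
      have hy : ∀ i, ∑ t, (B i t : ℝ) * y t = 0 := by
        intro i
        have e1 := hsplit i
        have e2 := hsplit i₀
        have : ∑ t, (B i t : ℝ) * y t
            = (a : ℝ) * ∑ t, (A i (j₀.succAbove t) : ℝ) * y t
              - (A i j₀ : ℝ) * ∑ t, (A i₀ (j₀.succAbove t) : ℝ) * y t := by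
          rw [Finset.mul_sum, Finset.mul_sum, ← Finset.sum_sub_distrib]
          refine Finset.sum_congr rfl fun t _ => ?_
          simp only [hB_def]
          push_cast
          ring
        rw [this]
        linear_combination (a : ℝ) * e1 - (A i j₀ : ℝ) * e2
      have hd'1 : 1 ≤ d * |a| := one_le_mul_of_one_le_of_one_le hd1 ha1
      have hd'D : d * |a| ≤ D * H :=
        mul_le_mul hdD haH (abs_nonneg _) (le_trans (by norm_num) hD)
      obtain ⟨k', hk'eq, hk'div, hk'close⟩ := hC' (d * |a|) hd'1 hd'D m B hB y hy
      -- write k' t = d * a * c t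
      have hc : ∀ t, ∃ c, k' t = d * a * c := by
        intro t
        have h := hk'div t
        have : |d * a| ∣ k' t := by rwa [abs_mul, abs_of_nonneg (by linarith : (0:ℤ) ≤ d)]
        exact (abs_dvd _ _).mp this
      choose c hc using hc
      set kj : ℤ := -(d * ∑ t, A i₀ (j₀.succAbove t) * c t) with hkj_def
      have hakj : a * kj = -∑ t, A i₀ (j₀.succAbove t) * k' t := by
        have h1 : ∑ t, A i₀ (j₀.succAbove t) * k' t
            = a * (d * ∑ t, A i₀ (j₀.succAbove t) * c t) := by
          rw [Finset.mul_sum, Finset.mul_sum]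
          exact Finset.sum_congr rfl fun t _ => by rw [hc t]; ring
        rw [h1, hkj_def]; ring
      set kk : Fin (N + 1) → ℤ := j₀.insertNth (α := fun _ => ℤ) kj k' with hkk_def
      have hkk_same : kk j₀ = kj := by
        rw [hkk_def]; exact Fin.insertNth_apply_same (α := fun _ => ℤ) j₀ kj k'
      have hkk_above : ∀ t, kk (j₀.succAbove t) = k' t := by
        intro t; rw [hkk_def]; exact Fin.insertNth_apply_succAbove (α := fun _ => ℤ) j₀ kj k' t
      have hsum : ∀ g : Fin (N + 1) → ℤ,
          ∑ j, g j * kk j = g j₀ * kj + ∑ t, g (j₀.succAbove t) * k' t := by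
        intro g
        rw [Fin.sum_univ_succAbove (fun j => g j * kk j) j₀, hkk_same]
        exact congrArg _ (Finset.sum_congr rfl fun t _ => by rw [hkk_above t])
      refine ⟨kk, ?_, ?_, ?_⟩
      · intro i
        rw [hsum (A i)]
        have hBi : (∑ t, (a * A i (j₀.succAbove t) - A i j₀ * A i₀ (j₀.succAbove t)) * k' t)
            = 0 := hk'eq i
        have hBi' : a * ∑ t, A i (j₀.succAbove t) * k' t
            = A i j₀ * ∑ t, A i₀ (j₀.succAbove t) * k' t := by
          rw [Finset.mul_sum, Finset.mul_sum, ← sub_eq_zero, ← Finset.sum_sub_distrib]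
          rw [← hBi]
          exact Finset.sum_congr rfl fun t _ => by ring
        have h0 : a * (A i j₀ * kj + ∑ t, A i (j₀.succAbove t) * k' t) = 0 := by
          rw [mul_add, hBi', ← mul_assoc, mul_comm a (A i j₀), mul_assoc, hakj]
          ring
        rcases mul_eq_zero.mp h0 with h | h
        · exact absurd h ha
        · exact h
      · intro j
        by_cases hj : j = j₀
        · rw [hj, hkk_same, hkj_def]
          exact ⟨-(∑ t, A i₀ (j₀.succAbove t) * c t), by ring⟩
        · obtain ⟨t, rfl⟩ := Fin.exists_succAbove_eq hj
          rw [hkk_above t, hc t]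
          exact ⟨a * c t, by ring⟩
      · have hH0 : (0 : ℝ) ≤ (H : ℝ) := by exact_mod_cast (by linarith : (0:ℤ) ≤ H)
        have hD0 : (0 : ℝ) ≤ (D : ℝ) := by exact_mod_cast (by linarith : (0:ℤ) ≤ D)
        have hNHC : (0 : ℝ) ≤ (N : ℝ) * (H : ℝ) * C' := by positivity
        intro j
        by_cases hj : j = j₀
        · rw [hj, hkk_same]
          have hreal : (a : ℝ) * (x j₀ - (kj : ℝ))
              = -∑ t, (A i₀ (j₀.succAbove t) : ℝ) * (y t - (k' t : ℝ)) := by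
            have e1 := hsplit i₀
            have e2 : (a : ℝ) * (kj : ℝ)
                = -∑ t, (A i₀ (j₀.succAbove t) : ℝ) * (k' t : ℝ) := by
              have := congrArg (fun z : ℤ => (z : ℝ)) hakj
              push_cast at this
              exact this
            have e3 : ∑ t, (A i₀ (j₀.succAbove t) : ℝ) * (y t - (k' t : ℝ))
                = (∑ t, (A i₀ (j₀.succAbove t) : ℝ) * y t)
                  - ∑ t, (A i₀ (j₀.succAbove t) : ℝ) * (k' t : ℝ) := by
              rw [← Finset.sum_sub_distrib]
              exact Finset.sum_congr rfl fun t _ => by ring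
            rw [e3]
            linear_combination e1 - e2
          have habs : |(a : ℝ)| * |x j₀ - (kj : ℝ)| ≤ (N : ℝ) * H * C' := by
            rw [← abs_mul, hreal, abs_neg]
            calc |∑ t, (A i₀ (j₀.succAbove t) : ℝ) * (y t - (k' t : ℝ))|
                ≤ ∑ t, |(A i₀ (j₀.succAbove t) : ℝ) * (y t - (k' t : ℝ))| :=
                  Finset.abs_sum_le_sum_abs _ _
              _ ≤ ∑ _t : Fin N, (H : ℝ) * C' := by
                  refine Finset.sum_le_sum fun t _ => ?_
                  rw [abs_mul]
                  refine mul_le_mul ?_ (hk'close t) (abs_nonneg _) hH0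
                  exact_mod_cast hA i₀ (j₀.succAbove t)
              _ = (N : ℝ) * H * C' := by
                  rw [Finset.sum_const, Finset.card_univ, Fintype.card_fin, nsmul_eq_mul]
                  ring
          have h1a : (1 : ℝ) ≤ |(a : ℝ)| := by exact_mod_cast ha1
          have hfin : |x j₀ - (kj : ℝ)| ≤ (N : ℝ) * H * C' := by
            nlinarith [abs_nonneg (x j₀ - (kj : ℝ))]
          linarith
        · obtain ⟨t, rfl⟩ := Fin.exists_succAbove_eq hj
          rw [hkk_above t]
          have := hk'close t
          have hy' : y t = x (j₀.succAbove t) := rfl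
          rw [hy'] at this
          linarith

/-- Lemma 6.9 (lem:linalg0): for every `N ≥ 1` there is a constant `C > 0`
depending only on `N` such that every real solution of a homogeneous linear
system in `N` variables with coefficients in `{0, 1, −1}` lies within entrywise
distance `C` of an integer solution. -/
theorem stmt_13 (N : ℕ) (hN : 1 ≤ N) :
    ∃ C > (0 : ℝ), ∀ (m : ℕ) (A : Matrix (Fin m) (Fin N) ℝ),
      (∀ i j, A i j = 0 ∨ A i j = 1 ∨ A i j = -1) →
      ∀ x : Fin N → ℝ, A.mulVec x = 0 →
        ∃ k : Fin N → ℤ,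
          A.mulVec (fun i => (k i : ℝ)) = 0 ∧ ∀ i, |x i - (k i : ℝ)| ≤ C := by
  obtain ⟨C, hCpos, hkey⟩ := key_linalg N 1 1 le_rfl le_rfl
  refine ⟨C, hCpos, ?_⟩
  intro m A hA x hx
  classical
  set A' : Matrix (Fin m) (Fin N) ℤ :=
    fun i j => if A i j = 0 then 0 else if A i j = 1 then 1 else -1 with hA'
  have hcast : ∀ i j, ((A' i j : ℤ) : ℝ) = A i j := by
    intro i j
    rcases hA i j with h | h | h <;> simp [hA', h] <;> norm_num
  have hbound : ∀ i j, |A' i j| ≤ 1 := by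
    intro i j
    rcases hA i j with h | h | h <;> simp [hA', h] <;> norm_num
  have hx' : ∀ i, ∑ j, ((A' i j : ℤ) : ℝ) * x j = 0 := by
    intro i
    have h0 : ∑ j, A i j * x j = 0 := by
      have := congrFun hx i
      simpa [Matrix.mulVec, dotProduct] using this
    rw [← h0]
    exact Finset.sum_congr rfl fun j _ => by rw [hcast i j]
  obtain ⟨k, hk1, -, hk3⟩ := hkey 1 le_rfl le_rfl m A' hbound x hx'
  refine ⟨k, ?_, hk3⟩
  funext i
  have h1 : ∑ j, A i j * (k j : ℝ) = ((∑ j, A' i j * k j : ℤ) : ℝ) := by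
    push_cast
    exact Finset.sum_congr rfl fun j _ => by rw [hcast i j]
  show (A.mulVec fun i => (k i : ℝ)) i = (0 : Fin m → ℝ) i
  simp only [Matrix.mulVec, dotProduct, Pi.zero_apply]
  rw [h1, hk1 i]
  norm_num
end

section
/- Let N ≥ 1 and let C = C(N) be the constant from the integer-approximation lemma. Let A be a matrix with m rows and N columns all of whose entries lie in {0, 1, −1}, and let x ∈ ℝ^N satisfy A·x = 0 and xᵢ > 0 for every i. Then there exists T₀ > 0 such that for every t > T₀ there exists k ∈ ℤ^N with A·k = 0, kᵢ > 0 for every i, and |t·xᵢ − kᵢ| ≤ C for each 1 ≤ i ≤ N. -/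
/-- Corollary 6.10 (cor:linalg1): let `C` be a constant with the property of the
integer-approximation lemma (every real solution of a homogeneous system with
coefficients in `{0, 1, −1}` in `N` variables is within entrywise distance `C`
of an integer solution). If `x` is a strictly positive real solution of such a
system, then there is `T₀ > 0` such that for every `t > T₀` there is a strictly
positive integer solution `k` with `|t·xᵢ − kᵢ| ≤ C` for every `i`. -/
theorem stmt_14 (N : ℕ) (hN : 1 ≤ N) (C : ℝ) (hC : 0 < C)
    (hCprop : ∀ (m : ℕ) (A : Matrix (Fin m) (Fin N) ℝ),
      (∀ i j, A i j = 0 ∨ A i j = 1 ∨ A i j = -1) →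
      ∀ x : Fin N → ℝ, A.mulVec x = 0 →
        ∃ k : Fin N → ℤ,
          A.mulVec (fun i => (k i : ℝ)) = 0 ∧ ∀ i, |x i - (k i : ℝ)| ≤ C)
    (m : ℕ) (A : Matrix (Fin m) (Fin N) ℝ)
    (hA : ∀ i j, A i j = 0 ∨ A i j = 1 ∨ A i j = -1)
    (x : Fin N → ℝ) (hx : A.mulVec x = 0) (hxpos : ∀ i, 0 < x i) :
    ∃ T₀ > (0 : ℝ), ∀ t : ℝ, T₀ < t →
      ∃ k : Fin N → ℤ,
        A.mulVec (fun i => (k i : ℝ)) = 0 ∧ (∀ i, 0 < k i) ∧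
        ∀ i, |t * x i - (k i : ℝ)| ≤ C := by

  haveI : Nonempty (Fin N) := ⟨⟨0, hN⟩⟩
  obtain ⟨i₀, hi₀⟩ := Finite.exists_min x
  set ε := x i₀ with hε
  have hεpos : 0 < ε := hxpos i₀
  refine ⟨C / ε, div_pos hC hεpos, fun t ht => ?_⟩
  have htx : A.mulVec (fun i => t * x i) = 0 := by
    have : (fun i => t * x i) = t • x := by ext i; simp [Pi.smul_apply, smul_eq_mul]
    rw [this, Matrix.mulVec_smul, hx, smul_zero]
  obtain ⟨k, hk0, hk⟩ := hCprop m A hA (fun i => t * x i) htx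
  refine ⟨k, hk0, fun i => ?_, hk⟩
  have h1 : C < t * x i := by
    calc C = (C / ε) * ε := by field_simp
    _ < t * ε := by
        apply mul_lt_mul_of_pos_right ht hεpos
    _ ≤ t * x i := by
        apply mul_le_mul_of_nonneg_left (hi₀ i)
        have : 0 < t := lt_trans (div_pos hC hεpos) ht
        linarith
  have h2 := hk i
  rw [abs_le] at h2
  have : (0:ℝ) < (k i : ℝ) := by linarith
  exact_mod_cast this
end
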